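/- (i) Every formal power series h ∈ K[[u]] with zero constant term satisfying h(u)^e = u^e·Q(h(u)) has u-order exactly 1, and its linear coefficient c := [u^1]{h} satisfies c^e = Q(0) (in particular c ≠ 0). (ii) Conversely, for every c ∈ K with c^e = Q(0) there exists exactly one formal power series h ∈ K[[u]] with zero constant term, linear coefficient c, and h(u)^e = u^e·Q(h(u)). (iii) Consequently, if K contains a primitive e-th root of unity ω and some element c with c^e = Q(0), then the set of solutions h ∈ u·K[[u]] of h(u)^e = u^e·Q(h(u)) is exactly the e distinct series u ↦ h_0(ω^i u), i = 1,…,e, where h_0 is the solution with linear coefficient c; these are the Newton–Puiseux solutions of H^e = q·Q(H) under q = u^e. -/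

import Mathlib

open PowerSeries

/-- Composition `Q ∘ h` of formal power series, intended for `h` with zero constant
term (then `coeff n (h^k) = 0` for `k > n`, so the finite truncation below is the
honest composition / substitution of `h` into `Q`). -/
noncomputable def pcomp {K : Type*} [Field K] (Q h : PowerSeries K) : PowerSeries K :=
  PowerSeries.mk fun n => ∑ k ∈ Finset.range (n + 1),
    PowerSeries.coeff k Q * PowerSeries.coeff n (h ^ k)

/-- The exponential series `Σ_{n≥0} z^n/n!`. -/
noncomputable def expSeries (K : Type*) [Field K] [CharZero K] : PowerSeries K :=
  PowerSeries.mk fun n => ((n.factorial : K))⁻¹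

/-- The logarithm series `Σ_{m≥1} (−1)^{m+1} z^m/m` (its coefficient at `m = 0`
vanishes since `(0 : K)⁻¹ = 0`). -/
noncomputable def logSeries (K : Type*) [Field K] [CharZero K] : PowerSeries K :=
  PowerSeries.mk fun n => (-1) ^ (n + 1) * (n : K)⁻¹

/-- The formal exponential `exp f` of a power series `f` with zero constant term. -/
noncomputable def expS {K : Type*} [Field K] [CharZero K] (f : PowerSeries K) : PowerSeries K :=
  pcomp (expSeries K) f

/-- The formal logarithm `log f = Σ_{m≥1} (−1)^{m+1}(f−1)^m/m` of a power series `f`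
with constant term `1`. -/
noncomputable def logS {K : Type*} [Field K] [CharZero K] (f : PowerSeries K) : PowerSeries K :=
  pcomp (logSeries K) (f - 1)

section Stmt6Aux
variable {K : Type*} [Field K]

lemma coeff_pcomp (Q h : PowerSeries K) (n : ℕ) :
    coeff n (pcomp Q h) = ∑ k ∈ Finset.range (n+1), coeff k Q * coeff n (h^k) := by
  simp [pcomp]

lemma constantCoeff_pcomp (Q h : PowerSeries K) :
    constantCoeff (pcomp Q h) = constantCoeff Q := by
  have := coeff_pcomp Q h 0
  simpa using this

lemma coeff_mul_low (f g : PowerSeries K) (a b : ℕ)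
    (hf : ∀ i < a, coeff i f = 0) (hg : ∀ j < b, coeff j g = 0) :
    coeff (a+b) (f*g) = coeff a f * coeff b g := by
  rw [coeff_mul, Finset.sum_eq_single (a, b)]
  · rintro ⟨i, j⟩ hp hne
    have hij : i + j = a + b := Finset.HasAntidiagonal.mem_antidiagonal.mp hp
    by_cases h1 : i < a
    · rw [hf _ h1, zero_mul]
    · have : j < b := by
        rcases Nat.lt_or_ge j b with h | h
        · exact h
        · exfalso; apply hne
          have : i = a := by omega
          have : j = b := by omega
          simp_all
      rw [hg _ this, mul_zero]
  · intro h; exact absurd (Finset.HasAntidiagonal.mem_antidiagonal.mpr (rfl : a + b = a + b)) h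

lemma coeff_pow_zero_low (f : PowerSeries K) (m : ℕ) (hf : ∀ i < m, coeff i f = 0) (k : ℕ) :
    ∀ j < k*m, coeff j (f^k) = 0 := by
  have h1 : (X:PowerSeries K)^m ∣ f := X_pow_dvd_iff.mpr hf
  have h2 : (X:PowerSeries K)^(k*m) ∣ f^k := by
    rw [mul_comm, pow_mul]
    exact pow_dvd_pow_of_dvd h1 k
  exact fun j hj => X_pow_dvd_iff.mp h2 j hj

lemma coeff_pow_low (f : PowerSeries K) (m : ℕ) (hf : ∀ i < m, coeff i f = 0) (k : ℕ) :
    coeff (k*m) (f^k) = (coeff m f)^k := by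
  induction k with
  | zero => simp
  | succ k ih =>
    rw [Nat.succ_mul, pow_succ,
      coeff_mul_low _ _ (k*m) m (coeff_pow_zero_low f m hf k) hf, ih, ← pow_succ]

lemma pcomp_dvd (Q s s' : PowerSeries K) (n : ℕ) (h : (X:PowerSeries K)^n ∣ s - s') :
    (X:PowerSeries K)^n ∣ pcomp Q s - pcomp Q s' := by
  rw [X_pow_dvd_iff]
  intro j hj
  rw [map_sub, coeff_pcomp, coeff_pcomp, ← Finset.sum_sub_distrib]
  apply Finset.sum_eq_zero
  intro k _
  have hk : coeff j (s^k) = coeff j (s'^k) := by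
    have h2 := dvd_trans h (sub_dvd_pow_sub_pow s s' k)
    have h3 := X_pow_dvd_iff.mp h2 j hj
    rw [map_sub, sub_eq_zero] at h3
    exact h3
  rw [hk, ← mul_sub, sub_self, mul_zero]

lemma fixpt (G : PowerSeries K → PowerSeries K)
    (hG0 : ∀ s, constantCoeff s = 0 → constantCoeff (G s) = 0)
    (hGc : ∀ s s' : PowerSeries K, constantCoeff s = 0 → constantCoeff s' = 0 →
      ∀ n : ℕ, (X:PowerSeries K)^n ∣ s - s' → (X:PowerSeries K)^(n+1) ∣ G s - G s') :
    ∃ s : PowerSeries K, constantCoeff s = 0 ∧ s = G s ∧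
      ∀ s', constantCoeff s' = 0 → s' = G s' → s' = s := by
  set F : ℕ → PowerSeries K := fun m => G^[m] 0 with hF
  have hF0 : ∀ m, constantCoeff (F m) = 0 := by
    intro m
    induction m with
    | zero => simp [hF]
    | succ m ih =>
      have : F (m+1) = G (F m) := Function.iterate_succ_apply' G m 0
      rw [this]; exact hG0 _ ih
  have hstep : ∀ m, (X:PowerSeries K)^m ∣ F m - F (m+1) := by
    intro m
    induction m with
    | zero => simpa using one_dvd _
    | succ m ih =>
      have e1 : F (m+1) = G (F m) := Function.iterate_succ_apply' G m 0
      have e2 : F (m+2) = G (F (m+1)) := Function.iterate_succ_apply' G (m+1) 0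
      rw [e1, e2]
      exact hGc _ _ (hF0 m) (hF0 (m+1)) m ih
  have hchain : ∀ m m', m ≤ m' → (X:PowerSeries K)^m ∣ F m - F m' := by
    intro m m' hm
    induction m' , hm using Nat.le_induction with
    | base => simp
    | succ m' hm ih =>
      have : F m - F (m'+1) = (F m - F m') + (F m' - F (m'+1)) := by ring
      rw [this]
      exact dvd_add ih ((pow_dvd_pow X hm).trans (hstep m'))
  set s : PowerSeries K := PowerSeries.mk (fun n => coeff n (F (n+1))) with hs
  have hcs : ∀ n m, n < m → coeff n s = coeff n (F m) := by
    intro n m hnm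
    have h1 := X_pow_dvd_iff.mp (hchain (n+1) m hnm) n (by omega)
    rw [map_sub, sub_eq_zero] at h1
    rw [hs, coeff_mk, h1]
  have hsF : ∀ m, (X:PowerSeries K)^m ∣ s - F m := by
    intro m
    rw [X_pow_dvd_iff]
    intro j hj
    rw [map_sub, hcs j m hj, sub_self]
  have hs0 : constantCoeff s = 0 := by
    rw [← coeff_zero_eq_constantCoeff_apply, hcs 0 1 (by omega),
      coeff_zero_eq_constantCoeff_apply]
    exact hF0 1
  refine ⟨s, hs0, ?_, ?_⟩
  · ext n
    have h1 : (X:PowerSeries K)^(n+1) ∣ G s - G (F n) :=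
      hGc _ _ hs0 (hF0 n) n (hsF n)
    have h2 : G (F n) = F (n+1) := (Function.iterate_succ_apply' G n 0).symm
    rw [h2] at h1
    have h3 := X_pow_dvd_iff.mp h1 n (by omega)
    rw [map_sub, sub_eq_zero] at h3
    rw [h3]; exact hcs n (n+1) (by omega)
  · intro s' hs'0 hfix
    have key : ∀ n : ℕ, (X:PowerSeries K)^n ∣ s' - s := by
      intro n
      induction n with
      | zero => simpa using one_dvd _
      | succ n ih =>
        have h1 : (X:PowerSeries K)^(n+1) ∣ G s' - G s := hGc _ _ hs'0 hs0 n ih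
        have h2 : s = G s := by
          ext k
          have hk : (X:PowerSeries K)^(k+1) ∣ G s - G (F k) :=
            hGc _ _ hs0 (hF0 k) k (hsF k)
          have h2' : G (F k) = F (k+1) := (Function.iterate_succ_apply' G k 0).symm
          rw [h2'] at hk
          have h3 := X_pow_dvd_iff.mp hk k (by omega)
          rw [map_sub, sub_eq_zero] at h3
          rw [h3]; exact hcs k (k+1) (by omega)
        rw [hfix, h2]
        exact h1
    ext n
    have := X_pow_dvd_iff.mp (key (n+1)) n (by omega)
    rw [map_sub, sub_eq_zero] at this
    exact this

lemma part_i_aux (e : ℕ) (he : 1 ≤ e) (Q : PowerSeries K)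
    (hQ0 : constantCoeff Q ≠ 0) (h : PowerSeries K)
    (h0 : constantCoeff h = 0) (heq : h ^ e = X ^ e * pcomp Q h) :
    (coeff 1 h) ^ e = constantCoeff Q ∧ coeff 1 h ≠ 0 ∧ h.order = 1 := by
  have hlow : ∀ i < 1, coeff i h = 0 := by
    intro i hi
    interval_cases i
    rwa [coeff_zero_eq_constantCoeff_apply]
  have h1 : coeff e (h^e) = (coeff 1 h)^e := by
    have := coeff_pow_low h 1 hlow e
    rwa [mul_one] at this
  have h2 : coeff e (X^e * pcomp Q h) = constantCoeff Q := by
    have := coeff_X_pow_mul (pcomp Q h) e 0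
    rw [zero_add] at this
    rw [this, coeff_zero_eq_constantCoeff_apply, constantCoeff_pcomp]
  have hce : (coeff 1 h)^e = constantCoeff Q := by rw [← h1, heq, h2]
  have hne : coeff 1 h ≠ 0 := by
    intro hc0
    rw [hc0, zero_pow (by omega)] at hce
    exact hQ0 hce.symm
  refine ⟨hce, hne, ?_⟩
  have := order_eq_nat.mpr ⟨hne, hlow⟩
  simpa using this

lemma sol_unique [CharZero K] (e : ℕ) (he : 1 ≤ e) (Q : PowerSeries K) (c : K) (hc : c ≠ 0)
    (h h' : PowerSeries K)
    (h0 : constantCoeff h = 0) (h1 : coeff 1 h = c) (heq : h ^ e = X ^ e * pcomp Q h)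
    (h'0 : constantCoeff h' = 0) (h'1 : coeff 1 h' = c) (h'eq : h' ^ e = X ^ e * pcomp Q h') :
    h = h' := by
  obtain ⟨d, rfl⟩ : ∃ d, e = d + 1 := ⟨e - 1, by omega⟩
  ext n
  induction n using Nat.strong_induction_on with
  | _ n IH =>
  match n with
  | 0 => rw [coeff_zero_eq_constantCoeff_apply, coeff_zero_eq_constantCoeff_apply, h0, h'0]
  | (m+1) =>
    have hdvd : (X:PowerSeries K)^(m+1) ∣ h - h' :=
      X_pow_dvd_iff.mpr (fun j hj => by rw [map_sub, IH j hj, sub_self])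
    set S := ∑ i ∈ Finset.range (d+1), h^i * h'^(d-i) with hS
    have hXh : (X : PowerSeries K) ∣ h := X_dvd_iff.mpr h0
    have hXh' : (X : PowerSeries K) ∣ h' := X_dvd_iff.mpr h'0
    have hgeom : h^(d+1) - h'^(d+1) = (h - h') * S := by
      rw [hS, mul_comm]
      exact (geom_sum₂_mul h h' (d+1)).symm
    have hSlow : ∀ j < d, coeff j S = 0 := by
      have : (X:PowerSeries K)^d ∣ S := by
        apply Finset.dvd_sum
        intro i hi
        have hid : i ≤ d := by
          have := Finset.mem_range.mp hi; omega
        have : (X:PowerSeries K)^d = X^i * X^(d-i) := by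
          rw [← pow_add]; congr 1; omega
        rw [this]
        exact mul_dvd_mul (pow_dvd_pow_of_dvd hXh i) (pow_dvd_pow_of_dvd hXh' (d-i))
      exact fun j hj => X_pow_dvd_iff.mp this j hj
    have hlow1 : ∀ i < (1:ℕ), coeff i h = 0 := by
      intro i hi; interval_cases i; rwa [coeff_zero_eq_constantCoeff_apply]
    have hlow1' : ∀ i < (1:ℕ), coeff i h' = 0 := by
      intro i hi; interval_cases i; rwa [coeff_zero_eq_constantCoeff_apply]
    have hSd : coeff d S = ((d+1 : ℕ) : K) * c^d := by
      rw [hS, map_sum]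
      have : ∀ i ∈ Finset.range (d+1), coeff d (h^i * h'^(d-i)) = c^d := by
        intro i hi
        have hid : i ≤ d := by have := Finset.mem_range.mp hi; omega
        have e1 := coeff_mul_low (h^i) (h'^(d-i)) i (d-i)
          (fun j hj => coeff_pow_zero_low h 1 hlow1 i j (by omega))
          (fun j hj => coeff_pow_zero_low h' 1 hlow1' (d-i) j (by omega))
        rw [show i + (d-i) = d from by omega] at e1
        rw [e1]
        have c1 : coeff i (h^i) = c^i := by
          have := coeff_pow_low h 1 hlow1 i; rw [mul_one] at this; rw [this, h1]
        have c2 : coeff (d-i) (h'^(d-i)) = c^(d-i) := by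
          have := coeff_pow_low h' 1 hlow1' (d-i); rw [mul_one] at this; rw [this, h'1]
        rw [c1, c2, ← pow_add]
        congr 1; omega
      rw [Finset.sum_congr rfl this, Finset.sum_const, Finset.card_range, nsmul_eq_mul]
    have key1 : coeff (m+1+d) (h^(d+1) - h'^(d+1)) =
        coeff (m+1) (h - h') * (((d+1:ℕ):K) * c^d) := by
      rw [hgeom, coeff_mul_low _ _ (m+1) d
        (fun j hj => by rw [map_sub, IH j hj, sub_self]) hSlow, hSd]
    have key2 : coeff (m+1+d) (h^(d+1) - h'^(d+1)) = 0 := by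
      rw [heq, h'eq, ← mul_sub]
      have hp : (X:PowerSeries K)^(m+1) ∣ pcomp Q h - pcomp Q h' := pcomp_dvd _ _ _ _ hdvd
      have e2 : m+1+d = m + (d+1) := by omega
      rw [e2, coeff_X_pow_mul]
      exact X_pow_dvd_iff.mp hp m (by omega)
    have hcoef : coeff (m+1) (h - h') * (((d+1:ℕ):K) * c^d) = 0 := by
      rw [← key1, key2]
    have hne : ((d+1:ℕ):K) * c^d ≠ 0 :=
      mul_ne_zero (Nat.cast_ne_zero.mpr (by omega)) (pow_ne_zero _ hc)
    have := (mul_eq_zero.mp hcoef).resolve_right hne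
    rw [map_sub, sub_eq_zero] at this
    exact this

lemma sol_exists [CharZero K] (e : ℕ) (he : 1 ≤ e) (Q : PowerSeries K)
    (hQ0 : constantCoeff Q ≠ 0) (c : K) (hc : c ^ e = constantCoeff Q) :
    ∃ h : PowerSeries K, constantCoeff h = 0 ∧ coeff 1 h = c ∧
      h ^ e = X ^ e * pcomp Q h := by
  have heK : ((e:K)) ≠ 0 := Nat.cast_ne_zero.mpr (by omega)
  set q0 : K := constantCoeff Q with hq0
  set G : PowerSeries K → PowerSeries K := fun s =>
    s + C (e:K)⁻¹ * (C q0⁻¹ * pcomp Q (C c * X * (1+s)) - (1+s)^e) with hG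
  have hG0 : ∀ s, constantCoeff s = 0 → constantCoeff (G s) = 0 := by
    intro s hs0
    simp only [hG, map_add, map_mul, map_sub, map_pow, map_one, constantCoeff_C,
      constantCoeff_pcomp, hs0, add_zero, one_pow]
    rw [inv_mul_cancel₀ hQ0]
    ring
  have hGc : ∀ s s' : PowerSeries K, constantCoeff s = 0 → constantCoeff s' = 0 →
      ∀ n : ℕ, (X:PowerSeries K)^n ∣ s - s' → (X:PowerSeries K)^(n+1) ∣ G s - G s' := by
    intro s s' hs0 hs'0 n hd
    set A := C c * X * (1+s) with hA
    set A' := C c * X * (1+s') with hA'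
    have h2 : (X:PowerSeries K)^(n+1) ∣ A - A' := by
      have e1 : A - A' = (C c * (s - s')) * X := by rw [hA, hA']; ring
      rw [e1, pow_succ]
      exact mul_dvd_mul (Dvd.dvd.mul_left hd _) dvd_rfl
    have h3 : (X:PowerSeries K)^(n+1) ∣ pcomp Q A - pcomp Q A' := pcomp_dvd _ _ _ _ h2
    set T := ∑ i ∈ Finset.range e, (1+s)^i * (1+s')^(e-1-i) with hT
    have h4 : (1+s)^e - (1+s')^e = (s - s') * T := by
      have := geom_sum₂_mul (1+s) (1+s') e
      rw [add_sub_add_left_eq_sub] at this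
      rw [← hT] at this
      rw [← this]; ring
    have h5 : constantCoeff T = (e : K) := by
      rw [hT, map_sum]
      have : ∀ i ∈ Finset.range e, constantCoeff ((1+s)^i * (1+s')^(e-1-i)) = 1 := by
        intro i _
        simp [map_mul, map_pow, map_add, hs0, hs'0]
      rw [Finset.sum_congr rfl this, Finset.sum_const, Finset.card_range, nsmul_eq_mul, mul_one]
    have expand : G s - G s' = (s - s') * (1 - C (e:K)⁻¹ * T)
        + C (e:K)⁻¹ * C q0⁻¹ * (pcomp Q A - pcomp Q A') := by
      have e0 : G s - G s' = (s - s')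
          + C (e:K)⁻¹ * (C q0⁻¹ * (pcomp Q A - pcomp Q A') - ((1+s)^e - (1+s')^e)) := by
        simp only [hG, hA, hA']; ring
      rw [e0, h4]; ring
    rw [expand]
    apply dvd_add
    · rw [pow_succ]
      apply mul_dvd_mul hd
      rw [X_dvd_iff, map_sub, map_mul, map_one, constantCoeff_C, h5,
        inv_mul_cancel₀ heK, sub_self]
    · exact Dvd.dvd.mul_left h3 _
  obtain ⟨s, hs0, hsfix, -⟩ := fixpt G hG0 hGc
  set h : PowerSeries K := C c * X * (1+s) with hh
  have hD : C q0⁻¹ * pcomp Q h - (1+s)^e = 0 := by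
    have e1 : C (e:K)⁻¹ * (C q0⁻¹ * pcomp Q h - (1+s)^e) = 0 := by
      have := hsfix
      rw [hG] at this
      simp only [← hh] at this
      exact (left_eq_add.mp this)
    have hCne : (C (e:K)⁻¹) ≠ 0 := by
      rw [← map_zero C]
      intro hcontr
      exact (inv_ne_zero heK) (C_injective hcontr)
    exact (mul_eq_zero.mp e1).resolve_left hCne
  have hpow : (1+s)^e = C q0⁻¹ * pcomp Q h := (sub_eq_zero.mp hD).symm
  refine ⟨h, ?_, ?_, ?_⟩
  · simp [hh, map_mul, constantCoeff_X]
  · rw [hh, mul_comm (C c) X, mul_assoc, coeff_succ_X_mul,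
      coeff_zero_eq_constantCoeff_apply, map_mul, map_add, map_one, constantCoeff_C, hs0]
    ring
  · have : h^e = C (c^e) * X^e * (1+s)^e := by
      rw [hh]; rw [mul_pow, mul_pow, map_pow]
    rw [this, hpow, hc]
    rw [show (C q0) * X^e * (C q0⁻¹ * pcomp Q h)
        = (C q0 * C q0⁻¹) * (X^e * pcomp Q h) from by ring,
      ← map_mul, mul_inv_cancel₀ hQ0, map_one, one_mul]

lemma pcomp_rescale (Q h : PowerSeries K) (a : K) :
    pcomp Q (rescale a h) = rescale a (pcomp Q h) := by
  ext n
  rw [coeff_rescale, coeff_pcomp, coeff_pcomp, Finset.mul_sum]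
  apply Finset.sum_congr rfl
  intro k _
  rw [← map_pow, coeff_rescale]
  ring

lemma rescale_sol (e : ℕ) (Q : PowerSeries K) (a : K) (ha : a^e = 1)
    (h₀ : PowerSeries K) (h0 : constantCoeff h₀ = 0)
    (heq : h₀^e = X^e * pcomp Q h₀) :
    constantCoeff (rescale a h₀) = 0 ∧ (rescale a h₀)^e = X^e * pcomp Q (rescale a h₀) := by
  constructor
  · rw [← coeff_zero_eq_constantCoeff_apply, coeff_rescale, pow_zero, one_mul,
      coeff_zero_eq_constantCoeff_apply, h0]
  · calc (rescale a h₀)^e = rescale a (h₀^e) := (map_pow _ _ _).symm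
      _ = rescale a (X^e * pcomp Q h₀) := by rw [heq]
      _ = (rescale a X)^e * rescale a (pcomp Q h₀) := by rw [map_mul, map_pow]
      _ = X^e * pcomp Q (rescale a h₀) := by
          rw [rescale_X, pcomp_rescale, mul_pow, ← map_pow, ha, map_one, one_mul]

end Stmt6Aux

/-- Let `K` be a field of characteristic zero, `e ≥ 1` an integer and
`Q ∈ K[[z]]` with `Q(0) ≠ 0`.
(i) Every `h ∈ K[[u]]` with zero constant term satisfying `h(u)^e = u^e·Q(h(u))` has
`u`-order exactly `1`, and its linear coefficient `c = [u^1]{h}` satisfies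
`c^e = Q(0)` (in particular `c ≠ 0`).
(ii) Conversely, for every `c ∈ K` with `c^e = Q(0)` there is exactly one
`h ∈ K[[u]]` with zero constant term, linear coefficient `c` and
`h(u)^e = u^e·Q(h(u))`.
(iii) Consequently, if `K` contains a primitive `e`-th root of unity `ω` and some `c`
with `c^e = Q(0)`, and `h₀` is the solution with linear coefficient `c`, then the
solutions `h ∈ u·K[[u]]` of `h^e = u^e·Q(h)` are exactly the series
`u ↦ h₀(ω^i·u)`, `i = 1,…,e`, and these `e` series are pairwise distinct. -/
theorem stmt6 {K : Type*} [Field K] [CharZero K] (e : ℕ) (he : 1 ≤ e)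
    (Q : PowerSeries K) (hQ0 : PowerSeries.constantCoeff Q ≠ 0) :
    (∀ h : PowerSeries K, PowerSeries.constantCoeff h = 0 →
        h ^ e = PowerSeries.X ^ e * pcomp Q h →
        h.order = 1 ∧ (PowerSeries.coeff 1 h) ^ e = PowerSeries.constantCoeff Q ∧
          PowerSeries.coeff 1 h ≠ 0) ∧
    (∀ c : K, c ^ e = PowerSeries.constantCoeff Q →
        ∃! h : PowerSeries K, PowerSeries.constantCoeff h = 0 ∧
          PowerSeries.coeff 1 h = c ∧ h ^ e = PowerSeries.X ^ e * pcomp Q h) ∧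
    (∀ ω : K, IsPrimitiveRoot ω e → ∀ c : K, c ^ e = PowerSeries.constantCoeff Q →
        ∀ h₀ : PowerSeries K, PowerSeries.constantCoeff h₀ = 0 →
          PowerSeries.coeff 1 h₀ = c → h₀ ^ e = PowerSeries.X ^ e * pcomp Q h₀ →
          (∀ h : PowerSeries K,
              (PowerSeries.constantCoeff h = 0 ∧ h ^ e = PowerSeries.X ^ e * pcomp Q h) ↔
              ∃ i ∈ Finset.Icc 1 e, h = PowerSeries.rescale (ω ^ i) h₀) ∧
          (∀ i ∈ Finset.Icc 1 e, ∀ j ∈ Finset.Icc 1 e,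
              PowerSeries.rescale (ω ^ i) h₀ = PowerSeries.rescale (ω ^ j) h₀ → i = j)) := by
  refine ⟨?_, ?_, ?_⟩
  · intro h h0 heq
    obtain ⟨hce, hne, hord⟩ := part_i_aux e he Q hQ0 h h0 heq
    exact ⟨hord, hce, hne⟩
  · intro c hc
    have hcne : c ≠ 0 := by
      intro h0; rw [h0, zero_pow (by omega)] at hc; exact hQ0 hc.symm
    obtain ⟨h, p1, p2, p3⟩ := sol_exists e he Q hQ0 c hc
    exact ⟨h, ⟨p1, p2, p3⟩, fun y ⟨q1, q2, q3⟩ =>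
      sol_unique e he Q c hcne y h q1 q2 q3 p1 p2 p3⟩
  · intro ω hω c hc h₀ h₀0 h₀1 h₀eq
    have hcne : c ≠ 0 := by
      intro h0; rw [h0, zero_pow (by omega)] at hc; exact hQ0 hc.symm
    haveI : NeZero e := ⟨by omega⟩
    have hrootpow : ∀ i : ℕ, (ω^i)^e = 1 := by
      intro i
      rw [← pow_mul, mul_comm, pow_mul, hω.pow_eq_one, one_pow]
    constructor
    · intro h
      constructor
      · rintro ⟨h0, heq⟩
        obtain ⟨hce, hne, -⟩ := part_i_aux e he Q hQ0 h h0 heq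
        have hroot : ((coeff 1 h) * c⁻¹)^e = 1 := by
          rw [mul_pow, hce, inv_pow, hc, mul_inv_cancel₀ hQ0]
        obtain ⟨i, hie, hωi⟩ := hω.eq_pow_of_pow_eq_one hroot
        refine ⟨if i = 0 then e else i, by rw [Finset.mem_Icc]; split <;> omega, ?_⟩
        have hωj : ω^(if i = 0 then e else i) = (coeff 1 h) * c⁻¹ := by
          split
          · rename_i hi0
            rw [hi0, pow_zero] at hωi
            rw [hω.pow_eq_one]; exact hωi
          · exact hωi
        obtain ⟨r0, req⟩ := rescale_sol e Q (ω^(if i = 0 then e else i))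
          (hrootpow _) h₀ h₀0 h₀eq
        have r1 : coeff 1 (rescale (ω^(if i = 0 then e else i)) h₀) = coeff 1 h := by
          rw [coeff_rescale, pow_one, h₀1, hωj]
          field_simp
        exact sol_unique e he Q (coeff 1 h) hne h _ h0 rfl heq r0 r1 req
      · rintro ⟨i, hi, rfl⟩
        exact rescale_sol e Q (ω^i) (hrootpow i) h₀ h₀0 h₀eq
    · intro i hi j hj hEq
      have h1 : coeff 1 (rescale (ω^i) h₀) = ω^i * c := by
        rw [coeff_rescale, pow_one, h₀1]
      have h2 : coeff 1 (rescale (ω^j) h₀) = ω^j * c := by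
        rw [coeff_rescale, pow_one, h₀1]
      have hωij : ω^i = ω^j := mul_right_cancel₀ hcne (by rw [← h1, hEq, h2])
      have hmod : ∀ a : ℕ, ω ^ a = ω ^ (a % e) := by
        intro a
        conv_lhs => rw [← Nat.mod_add_div a e]
        rw [pow_add, pow_mul, hω.pow_eq_one, one_pow, mul_one]
      have hlt : ∀ a : ℕ, a % e < e := fun a => Nat.mod_lt _ (by omega)
      have hinj := hω.pow_inj (hlt i) (hlt j) (by rw [← hmod, ← hmod, hωij])
      rw [Finset.mem_Icc] at hi hj
      rcases Nat.lt_or_ge i e with h | h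
      · rcases Nat.lt_or_ge j e with h' | h'
        · rwa [Nat.mod_eq_of_lt h, Nat.mod_eq_of_lt h'] at hinj
        · have hj' : j = e := by omega
          rw [Nat.mod_eq_of_lt h, hj', Nat.mod_self] at hinj; omega
      · have hi' : i = e := by omega
        rcases Nat.lt_or_ge j e with h' | h'
        · rw [hi', Nat.mod_self, Nat.mod_eq_of_lt h'] at hinj; omega
        · omega
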